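/- Let C > 0, let ψ : (0,1) → (0,∞) be decreasing and satisfy ∫ₜ¹ ψ(s)/s ds ≤ C·ψ(t) for all t ∈ (0,1), and let s₀ > e^{2C}. Then ψ(s₀·t) < ψ(t)/2 for every t ∈ (0, 1/s₀). -/

import Mathlib

open MeasureTheory Set

noncomputable section

/-- If `ψ` is positive and decreasing on `(0,1)` with `∫ₜ¹ ψ(s)/s ds ≤ C ψ(t)` for all
`t ∈ (0,1)`, and `s₀ > e^{2C}`, then `ψ(s₀ t) < ψ(t)/2` for every `t ∈ (0, 1/s₀)`. -/
theorem decreasing_cesaro_contraction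
    (C : ℝ) (hC : 0 < C) (ψ : ℝ → ℝ)
    (hanti : AntitoneOn ψ (Ioo 0 1))
    (hpos : ∀ t ∈ Ioo (0:ℝ) 1, 0 < ψ t)
    (hint : ∀ t ∈ Ioo (0:ℝ) 1, IntegrableOn (fun s => ψ s / s) (Ioo t 1))
    (hbound : ∀ t ∈ Ioo (0:ℝ) 1, (∫ s in Ioo t 1, ψ s / s) ≤ C * ψ t)
    (s₀ : ℝ) (hs₀ : Real.exp (2 * C) < s₀) :
    ∀ t : ℝ, 0 < t → t < 1 / s₀ → ψ (s₀ * t) < ψ t / 2 := by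
  intro t ht ht'
  have hs₀1 : 1 < s₀ := lt_of_le_of_lt (Real.one_le_exp (by positivity)) hs₀
  have hs₀pos : 0 < s₀ := lt_trans one_pos hs₀1
  set u := s₀ * t with hu
  have htu : t < u := by
    have := (mul_lt_mul_iff_left₀ ht).2 hs₀1
    simpa [hu] using this
  have hupos : 0 < u := mul_pos hs₀pos ht
  have hu1 : u < 1 := by
    rw [hu]
    rw [lt_div_iff₀ hs₀pos] at ht'
    linarith
  have htmem : t ∈ Ioo (0:ℝ) 1 := ⟨ht, htu.trans hu1⟩
  have humem : u ∈ Ioo (0:ℝ) 1 := ⟨hupos, hu1⟩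
  have hψu : 0 < ψ u := hpos u humem
  have hlog : 2 * C < Real.log s₀ := by
    have := Real.log_lt_log (Real.exp_pos _) hs₀
    rwa [Real.log_exp] at this
  -- integral of 1/s over Ioo t u
  have hintinv : ∫ s in Ioo t u, ψ u / s = ψ u * Real.log s₀ := by
    have h0 : ∀ x ∈ Set.uIcc t u, x ≠ 0 := by
      rw [Set.uIcc_of_le htu.le]
      intro x hx
      exact ne_of_gt (lt_of_lt_of_le ht hx.1)
    have hinv : ∫ s in Ioo t u, s⁻¹ = Real.log s₀ := by
      rw [← integral_Ioc_eq_integral_Ioo, ← intervalIntegral.integral_of_le htu.le,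
        integral_inv (fun h => (h0 0 h) rfl),
        hu, mul_div_assoc, div_self (ne_of_gt ht), mul_one]
    simp only [div_eq_mul_inv]
    rw [integral_const_mul, hinv]
  -- integrability
  have hint1 : IntegrableOn (fun s => ψ s / s) (Ioo t 1) := hint t htmem
  have hsub : Ioo t u ⊆ Ioo t 1 := Ioo_subset_Ioo le_rfl hu1.le
  have hint2 : IntegrableOn (fun s => ψ s / s) (Ioo t u) := hint1.mono_set hsub
  have hint3 : IntegrableOn (fun s => ψ u / s) (Ioo t u) := by
    apply Integrable.mono hint2 (by fun_prop)
    filter_upwards [ae_restrict_mem measurableSet_Ioo] with s hs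
    have hs0 : 0 < s := ht.trans hs.1
    have hψs : 0 < ψ s := hpos s ⟨hs0, hs.2.trans hu1⟩
    have hle : ψ u ≤ ψ s := hanti ⟨hs0, hs.2.trans hu1⟩ humem hs.2.le
    rw [Real.norm_eq_abs, Real.norm_eq_abs, abs_div, abs_div,
      abs_of_pos hψu, abs_of_pos hψs]
    gcongr
  -- lower bound
  have hlow : ψ u * Real.log s₀ ≤ ∫ s in Ioo t u, ψ s / s := by
    rw [← hintinv]
    apply setIntegral_mono_on hint3 hint2 measurableSet_Ioo
    intro s hs
    have hs0 : 0 < s := ht.trans hs.1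
    have hle : ψ u ≤ ψ s := hanti ⟨hs0, hs.2.trans hu1⟩ humem hs.2.le
    gcongr
  -- monotone in domain
  have hmono : ∫ s in Ioo t u, ψ s / s ≤ ∫ s in Ioo t 1, ψ s / s := by
    apply setIntegral_mono_set hint1 _ (HasSubset.Subset.eventuallyLE hsub)
    filter_upwards [ae_restrict_mem measurableSet_Ioo] with s hs
    have hs0 : 0 < s := ht.trans hs.1
    exact div_nonneg (hpos s ⟨hs0, hs.2⟩).le hs0.le
  have hmain : ψ u * Real.log s₀ ≤ C * ψ t :=
    hlow.trans (hmono.trans (hbound t htmem))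
  have hstrict : ψ u * (2 * C) < C * ψ t :=
    lt_of_lt_of_le ((mul_lt_mul_iff_right₀ hψu).2 hlog) hmain
  nlinarith [hψu, hC]
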